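/- Let n ≥ 6 and let T be a strongly connected tournament of order n with diameter n−3 belonging to the class H_{n−3,n}, with parameters h_1 = n−4, h_2, h_3, h_4 = 1 as in the standard description of H_{n−3,n} (so the non-critical vertices are w_1,w_2,w_3,w_4 and the critical vertices are v_1,...,v_{n−4}). If h_3 ≤ h_2, then the number of circuits of length 3 in T equals n−2. -/

import Mathlib

/-- A tournament on a vertex type `V`: every ordered pair of distinct vertices
carries exactly one arc. `adj v w = true` means there is an arc from `v` to `w`
(`v` dominates `w`). -/
structure Tournament (V : Type*) where
  adj : V → V → Bool
  irrefl : ∀ v, adj v v = false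
  compl : ∀ v w, v ≠ w → adj v w = !adj w v

namespace Tournament

variable {V : Type*} {W : Type*}

/-- The subtournament induced on a set of vertices. -/
def restrict (T : Tournament V) (s : Set V) : Tournament s where
  adj a b := T.adj a b
  irrefl a := T.irrefl a
  compl a b h := T.compl a b (fun hab => h (Subtype.ext hab))

/-- A tournament is strongly connected if every vertex can be reached from
every other one by a directed path. -/
def Strong (T : Tournament V) : Prop :=
  ∀ v w : V, Relation.ReflTransGen (fun a b => T.adj a b = true) v w

/-- A vertex of a tournament is non-critical if deleting it leaves a strongly
connected tournament. -/
def Noncritical (T : Tournament V) (w : V) : Prop :=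
  (T.restrict {x | x ≠ w}).Strong

/-- There is a directed walk of length `k` from `v` to `w`. -/
def HasWalk (T : Tournament V) (v w : V) (k : ℕ) : Prop :=
  ∃ f : Fin (k + 1) → V, f 0 = v ∧ f (Fin.last k) = w ∧
    ∀ i : Fin k, T.adj (f i.castSucc) (f i.succ) = true

/-- The distance from `v` to `w`: the length of a shortest directed path. -/
noncomputable def dist (T : Tournament V) (v w : V) : ℕ :=
  sInf {k | T.HasWalk v w k}

/-- The diameter: the maximum distance over ordered pairs of distinct vertices. -/
noncomputable def diam (T : Tournament V) : ℕ :=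
  sSup {m | ∃ v w : V, v ≠ w ∧ T.dist v w = m}

/-- Cyclic successor on `Fin ℓ`. -/
def cyc {ℓ : ℕ} (i : Fin ℓ) : Fin ℓ :=
  if h : i.val + 1 < ℓ then ⟨i.val + 1, h⟩ else ⟨0, i.pos⟩

/-- The number of circuits (directed cycles through distinct vertices) of
length `ℓ` in `T`.  Each circuit is represented by exactly `ℓ` cyclic
parametrisations, whence the division. -/
noncomputable def circCount (T : Tournament V) (ℓ : ℕ) : ℕ :=
  Nat.card {f : Fin ℓ → V // Function.Injective f ∧
    ∀ i : Fin ℓ, T.adj (f i) (f (cyc i)) = true} / ℓ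

/-- The number of circuits of length `ℓ` in `T` passing through the vertex `w`. -/
noncomputable def circCountAt (T : Tournament V) (ℓ : ℕ) (w : V) : ℕ :=
  Nat.card {f : Fin ℓ → V // Function.Injective f ∧
    (∀ i : Fin ℓ, T.adj (f i) (f (cyc i)) = true) ∧ ∃ i, f i = w} / ℓ

/-- The number of strongly connected subtournaments of order `ℓ` in `T`. -/
noncomputable def strongSubCount (T : Tournament V) (ℓ : ℕ) : ℕ :=
  Nat.card {s : Finset V // s.card = ℓ ∧ (T.restrict ↑s).Strong}

/-- Isomorphism of tournaments. -/
def Iso (T : Tournament V) (S : Tournament W) : Prop :=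
  ∃ e : V ≃ W, ∀ a b : V, T.adj a b = S.adj (e a) (e b)

/-- Build a tournament from the function `f` recording which arcs point
"upwards" with respect to a linear order on the vertices. -/
def ofFn [LinearOrder V] (f : V → V → Bool) : Tournament V where
  adj u v := if u < v then f u v else if v < u then !f v u else false
  irrefl v := by simp
  compl u v h := by
    rcases lt_trichotomy u v with h1 | h1 | h1
    · simp [h1, not_lt_of_gt h1]
    · exact absurd h1 h
    · simp [h1, not_lt_of_gt h1]

/-- The tournament `T_{n-1,n}(z_0,…,z_{n-1})`: `z_i → z_{i+1}` and `z_j → z_i`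
for `j > i + 1`. -/
def lineT (n : ℕ) : Tournament (Fin n) :=
  ofFn fun i j => decide (j.val = i.val + 1)

end Tournament

section Helpers

lemma vec3_0' {V : Type*} (a b c : V) : ![a,b,c] 0 = a := rfl
lemma vec3_1' {V : Type*} (a b c : V) : ![a,b,c] 1 = b := rfl
lemma vec3_2' {V : Type*} (a b c : V) : ![a,b,c] 2 = c := rfl

lemma inj3' {V : Type*} {a b c : V} (hab : a ≠ b) (hac : a ≠ c) (hbc : b ≠ c) :
    Function.Injective ![a,b,c] := by
  intro i j hij
  fin_cases i <;> fin_cases j <;> simp_all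

lemma cyc3adj' {V : Type*} (T : Tournament V) {a b c : V}
    (h1 : T.adj a b = true) (h2 : T.adj b c = true) (h3 : T.adj c a = true) :
    ∀ k : Fin 3, T.adj (![a,b,c] k) (![a,b,c] (k+1)) = true := by
  intro k
  fin_cases k
  · exact h1
  · exact h2
  · exact h3

end Helpers

/-- A member `T` of the class `H_{n-3,n}` (`n ≥ 6`), given by its standard
description via the critical path `v_1,…,v_{n-4}`, the non-critical vertices
`w_1,w_2,w_3,w_4` and the parameters `h_1 = n-5, h_2, h_3, h_4 = 1`, satisfies
`c_3(T) = n - 2` whenever `h_3 ≤ h_2`. -/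
theorem statement_17 (n : ℕ) (hn : 6 ≤ n) {V : Type} (T : Tournament V)
    (hcard : Nat.card V = n) (hT : T.Strong) (hdiam : T.diam = n - 3)
    (v : Fin (n - 4) → V) (w : Fin 4 → V) (h : Fin 4 → ℕ)
    (hv : Function.Injective v) (hw : Function.Injective w)
    (hvw : ∀ i j, v i ≠ w j)
    (hcover : ∀ x : V, (∃ i, v i = x) ∨ (∃ j, w j = x))
    (hvadj : ∀ i j : Fin (n - 4),
      (T.adj (v i) (v j) = true ↔ (j.val = i.val + 1 ∨ j.val + 1 < i.val)))
    (hwadj : ∀ i j : Fin 4, (T.adj (w i) (w j) = true ↔ i < j))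
    (hH : ∀ (i : Fin 4) (k : Fin (n - 4)),
      (T.adj (w i) (v k) = true ↔ k.val + 1 ≤ h i))
    (hh1 : h 0 = n - 5) (hh4 : h 3 = 1)
    (hh2 : 1 ≤ h 1 ∧ h 1 ≤ n - 5) (hh3 : 1 ≤ h 2 ∧ h 2 ≤ n - 5)
    (hmono : ∀ r s : Fin 4, r ≤ s → h s ≤ h r + 1)
    (hle : h 2 ≤ h 1) :
    T.circCount 3 = n - 2 := by
  have hn4 : 0 < n - 4 := by omega
  have four : ∀ i : Fin 4, i = 0 ∨ i = 1 ∨ i = 2 ∨ i = 3 := by decide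
  have three : ∀ k : Fin 3, k = 0 ∨ k = 1 ∨ k = 2 := by decide
  have hb : ∀ i : Fin 4, 1 ≤ h i ∧ h i ≤ n - 5 := by
    intro i
    rcases four i with rfl|rfl|rfl|rfl <;> omega
  have hcasesLt : ∀ i j : Fin 4, i < j →
      (i = 0 ∧ j = 1) ∨ (i = 0 ∧ j = 2) ∨ (i = 0 ∧ j = 3) ∨
      (i = 1 ∧ j = 2) ∨ (i = 1 ∧ j = 3) ∨ (i = 2 ∧ j = 3) := by decide
  have hord : ∀ i j : Fin 4, i < j → h j ≤ h i := by
    intro i j hij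
    rcases hcasesLt i j hij with ⟨rfl,rfl⟩|⟨rfl,rfl⟩|⟨rfl,rfl⟩|⟨rfl,rfl⟩|⟨rfl,rfl⟩|⟨rfl,rfl⟩ <;> omega
  have hvwadj : ∀ (k : Fin (n-4)) (i : Fin 4), T.adj (v k) (w i) = true ↔ h i ≤ k.val := by
    intro k i
    have hne : v k ≠ w i := hvw k i
    rw [T.compl _ _ hne]
    constructor
    · intro hadj
      by_contra hc
      have h2 : T.adj (w i) (v k) = true := (hH i k).mpr (by omega)
      rw [h2] at hadj
      simp at hadj
    · intro hle2
      have h2 : T.adj (w i) (v k) = false := by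
        cases hb2 : T.adj (w i) (v k)
        · rfl
        · have := (hH i k).mp hb2; omega
      rw [h2]; rfl
  obtain ⟨vv, hvvdef⟩ : ∃ vv : ℕ → V, ∀ k, vv k = v ⟨k % (n-4), Nat.mod_lt _ hn4⟩ :=
    ⟨_, fun _ => rfl⟩
  have hvvv : ∀ x : Fin (n-4), vv x.val = v x := by
    intro x
    rw [hvvdef]
    exact congrArg v (Fin.ext (Nat.mod_eq_of_lt x.isLt))
  have hvvinj : ∀ x y, x < n-4 → y < n-4 → vv x = vv y → x = y := by
    intro x y hx hy hxy
    rw [hvvdef, hvvdef] at hxy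
    have := congrArg Fin.val (hv hxy)
    simpa [Nat.mod_eq_of_lt hx, Nat.mod_eq_of_lt hy] using this
  have hvvw : ∀ x i, vv x ≠ w i := by
    intro x i
    rw [hvvdef]
    exact hvw _ i
  have hA : ∀ x y, x < n-4 → y < n-4 →
      (T.adj (vv x) (vv y) = true ↔ (y = x+1 ∨ y+1 < x)) := by
    intro x y hx hy
    have := hvadj ⟨x,hx⟩ ⟨y,hy⟩
    rw [← hvvv ⟨x,hx⟩, ← hvvv ⟨y,hy⟩] at this
    exact this
  have hWv : ∀ (i : Fin 4) x, x < n-4 → (T.adj (w i) (vv x) = true ↔ x + 1 ≤ h i) := by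
    intro i x hx
    have := hH i ⟨x,hx⟩
    rw [← hvvv ⟨x,hx⟩] at this
    exact this
  have hvW : ∀ x (i : Fin 4), x < n-4 → (T.adj (vv x) (w i) = true ↔ h i ≤ x) := by
    intro x i hx
    have := hvwadj ⟨x,hx⟩ i
    rw [← hvvv ⟨x,hx⟩] at this
    exact this
  obtain ⟨wiOf, hwiOfdef⟩ : ∃ wiOf : ℕ → Fin 4, ∀ t, wiOf t = ⟨t % 4, Nat.mod_lt _ (by norm_num)⟩ :=
    ⟨_, fun _ => rfl⟩
  have hwiOfval : ∀ i : Fin 4, wiOf i.val = i := by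
    intro i
    rw [hwiOfdef]
    exact Fin.ext (Nat.mod_eq_of_lt i.isLt)
  obtain ⟨base, hbasedef⟩ : ∃ base : ℕ → Fin 3 → V, ∀ t, base t =
      if t < n - 6 then ![vv t, vv (t+1), vv (t+2)]
      else ![vv (h (wiOf (t - (n-6))) - 1), vv (h (wiOf (t - (n-6)))), w (wiOf (t - (n-6)))] :=
    ⟨_, fun _ => rfl⟩
  have hshape : ∀ t, t < n - 6 → ∀ k : Fin 3, ∃ x, x < n - 4 ∧ base t k = vv x := by
    intro t ht k
    rcases three k with rfl|rfl|rfl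
    · exact ⟨t, by omega, by rw [hbasedef, if_pos ht, vec3_0']⟩
    · exact ⟨t+1, by omega, by rw [hbasedef, if_pos ht, vec3_1']⟩
    · exact ⟨t+2, by omega, by rw [hbasedef, if_pos ht, vec3_2']⟩
  have hbaseprop : ∀ t, t < n - 2 → Function.Injective (base t) ∧
      ∀ k : Fin 3, T.adj (base t k) (base t (k+1)) = true := by
    intro t ht
    by_cases htt : t < n - 6
    · rw [hbasedef, if_pos htt]
      have h0 : t < n - 4 := by omega
      have h1 : t + 1 < n - 4 := by omega
      have h2 : t + 2 < n - 4 := by omega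
      constructor
      · apply inj3'
        · intro hEq; have := hvvinj _ _ h0 h1 hEq; omega
        · intro hEq; have := hvvinj _ _ h0 h2 hEq; omega
        · intro hEq; have := hvvinj _ _ h1 h2 hEq; omega
      · exact cyc3adj' T ((hA _ _ h0 h1).mpr (by omega)) ((hA _ _ h1 h2).mpr (by omega))
          ((hA _ _ h2 h0).mpr (by omega))
    · rw [hbasedef, if_neg htt]
      have hbi := hb (wiOf (t - (n-6)))
      have hhi1 : h (wiOf (t - (n-6))) - 1 < n - 4 := by omega
      have hhi : h (wiOf (t - (n-6))) < n - 4 := by omega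
      constructor
      · apply inj3'
        · intro hEq; have := hvvinj _ _ hhi1 hhi hEq; omega
        · exact hvvw _ _
        · exact hvvw _ _
      · exact cyc3adj' T ((hA _ _ hhi1 hhi).mpr (by omega)) ((hvW _ _ hhi).mpr (by omega))
          ((hWv _ _ hhi1).mpr (by omega))
  obtain ⟨g, hgdef⟩ : ∃ g : Fin (n-2) × Fin 3 → {f : Fin 3 → V // Function.Injective f ∧
      ∀ i : Fin 3, T.adj (f i) (f (Tournament.cyc i)) = true},
      ∀ p, (g p).1 = fun j => base p.1.val (j + p.2) := by
    refine ⟨fun p => ⟨fun j => base p.1.val (j + p.2), ?_, ?_⟩, fun p => rfl⟩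
    · exact ((hbaseprop p.1.val p.1.isLt).1).comp (add_left_injective p.2)
    · intro i
      have hcyc3 : Tournament.cyc i = i + 1 := by
        rcases three i with rfl|rfl|rfl <;> rfl
      rw [hcyc3]
      show T.adj (base p.1.val (i + p.2)) (base p.1.val (i + 1 + p.2)) = true
      have e : i + 1 + p.2 = (i + p.2) + 1 := by abel
      rw [e]
      exact (hbaseprop p.1.val p.1.isLt).2 (i + p.2)
  have hginj : Function.Injective g := by
    rintro ⟨m, r⟩ ⟨m', r'⟩ heq
    have hpt : ∀ j : Fin 3, base m.val (j + r) = base m'.val (j + r') := by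
      intro j
      have h1 := congrArg Subtype.val heq
      rw [hgdef, hgdef] at h1
      exact congrFun h1 j
    have hpt' : ∀ k : Fin 3, base m.val k = base m'.val (k + (r' - r)) := by
      intro k
      have h1 := hpt (k - r)
      have e1 : k - r + r = k := by abel
      have e2 : k - r + r' = k + (r' - r) := by abel
      rw [e1, e2] at h1
      exact h1
    by_cases hm : m.val < n - 6 <;> by_cases hm' : m'.val < n - 6
    · rcases three (r' - r) with hd|hd|hd
      · have h0 := hpt' 0
        rw [hd, add_zero, hbasedef, if_pos hm, hbasedef, if_pos hm', vec3_0'] at h0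
        have hmm := hvvinj _ _ (by omega) (by omega) h0
        have hr : r = r' := (sub_eq_zero.mp hd).symm
        rw [show m = m' from Fin.ext hmm, hr]
      · exfalso
        have h0 := hpt' 0
        have h2 := hpt' 2
        rw [hd, show ((0:Fin 3)+1 = 1) from rfl, hbasedef, if_pos hm, hbasedef, if_pos hm',
          vec3_0', vec3_1'] at h0
        rw [hd, show ((2:Fin 3)+1 = 0) from rfl, hbasedef, if_pos hm, hbasedef, if_pos hm',
          vec3_2', vec3_0'] at h2
        have e0 := hvvinj _ _ (by omega) (by omega) h0
        have e2 := hvvinj _ _ (by omega) (by omega) h2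
        omega
      · exfalso
        have h0 := hpt' 0
        have h1 := hpt' 1
        rw [hd, show ((0:Fin 3)+2 = 2) from rfl, hbasedef, if_pos hm, hbasedef, if_pos hm',
          vec3_0', vec3_2'] at h0
        rw [hd, show ((1:Fin 3)+2 = 0) from rfl, hbasedef, if_pos hm, hbasedef, if_pos hm',
          vec3_1', vec3_0'] at h1
        have e0 := hvvinj _ _ (by omega) (by omega) h0
        have e1 := hvvinj _ _ (by omega) (by omega) h1
        omega
    · exfalso
      have h1 := hpt (2 - r')
      have e : 2 - r' + r' = (2:Fin 3) := by abel
      rw [e] at h1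
      obtain ⟨x, hx, hbx⟩ := hshape m.val hm (2 - r' + r)
      rw [hbx, hbasedef, if_neg hm', vec3_2'] at h1
      exact hvvw _ _ h1
    · exfalso
      have h1 := hpt (2 - r)
      have e : 2 - r + r = (2:Fin 3) := by abel
      rw [e] at h1
      obtain ⟨x, hx, hbx⟩ := hshape m'.val hm' (2 - r + r')
      rw [hbx, hbasedef, if_neg hm, vec3_2'] at h1
      exact hvvw _ _ h1.symm
    · have h1 := hpt (2 - r)
      have e : 2 - r + r = (2:Fin 3) := by abel
      rw [e, hbasedef, if_neg hm, vec3_2'] at h1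
      rcases three (2 - r + r') with hk|hk|hk
      · exfalso
        rw [hk, hbasedef, if_neg hm', vec3_0'] at h1
        exact hvvw _ _ h1.symm
      · exfalso
        rw [hk, hbasedef, if_neg hm', vec3_1'] at h1
        exact hvvw _ _ h1.symm
      · rw [hk, hbasedef, if_neg hm', vec3_2'] at h1
        have hii := hw h1
        rw [hwiOfdef, hwiOfdef] at hii
        simp only [Fin.mk.injEq] at hii
        have hmlt := m.isLt
        have hmlt' := m'.isLt
        have hmm : m.val = m'.val := by omega
        have hr : r' = r := by rw [← sub_eq_zero]; rw [← sub_eq_zero] at hk; rw [← hk]; abel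
        rw [show m = m' from Fin.ext hmm, hr]
  have hgsurj : Function.Surjective g := by
    rintro ⟨f, hfinj, hfcyc⟩
    have hab : T.adj (f 0) (f 1) = true := by
      have := hfcyc 0; rwa [show Tournament.cyc (0:Fin 3) = 1 from rfl] at this
    have hbc : T.adj (f 1) (f 2) = true := by
      have := hfcyc 1; rwa [show Tournament.cyc (1:Fin 3) = 2 from rfl] at this
    have hca : T.adj (f 2) (f 0) = true := by
      have := hfcyc 2; rwa [show Tournament.cyc (2:Fin 3) = 0 from rfl] at this
    have hmk : ∀ (t : ℕ) (ht : t < n - 2) (r : Fin 3),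
        base t (0 + r) = f 0 → base t (1 + r) = f 1 → base t (2 + r) = f 2 →
        ∃ p, g p = ⟨f, hfinj, hfcyc⟩ := by
      intro t ht r h0 h1 h2
      refine ⟨(⟨t, ht⟩, r), ?_⟩
      apply Subtype.ext
      rw [hgdef]
      funext j
      rcases three j with rfl|rfl|rfl
      · exact h0
      · exact h1
      · exact h2
    rcases hcover (f 0) with ⟨x, hx⟩ | ⟨i0, hi0⟩ <;>
      rcases hcover (f 1) with ⟨y, hy⟩ | ⟨i1, hi1⟩ <;>
      rcases hcover (f 2) with ⟨z, hz⟩ | ⟨i2, hi2⟩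
    · -- v v v
      rw [← hx, ← hy, hvadj] at hab
      rw [← hy, ← hz, hvadj] at hbc
      rw [← hz, ← hx, hvadj] at hca
      have hfx : vv x.val = f 0 := by rw [hvvv, hx]
      have hfy : vv y.val = f 1 := by rw [hvvv, hy]
      have hfz : vv z.val = f 2 := by rw [hvvv, hz]
      have hxlt := x.isLt; have hylt := y.isLt; have hzlt := z.isLt
      rcases hab with h1|h1 <;> rcases hbc with h2|h2 <;> rcases hca with h3|h3
      · exfalso; omega
      · refine hmk x.val (by omega) 0 ?_ ?_ ?_
        · rw [show ((0:Fin 3)+0 = 0) from rfl, hbasedef, if_pos (by omega : x.val < n-6), vec3_0', hfx]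
        · rw [show ((1:Fin 3)+0 = 1) from rfl, hbasedef, if_pos (by omega : x.val < n-6), vec3_1',
            show x.val+1 = y.val from by omega, hfy]
        · rw [show ((2:Fin 3)+0 = 2) from rfl, hbasedef, if_pos (by omega : x.val < n-6), vec3_2',
            show x.val+2 = z.val from by omega, hfz]
      · refine hmk z.val (by omega) 1 ?_ ?_ ?_
        · rw [show ((0:Fin 3)+1 = 1) from rfl, hbasedef, if_pos (by omega : z.val < n-6), vec3_1',
            show z.val+1 = x.val from by omega, hfx]
        · rw [show ((1:Fin 3)+1 = 2) from rfl, hbasedef, if_pos (by omega : z.val < n-6), vec3_2',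
            show z.val+2 = y.val from by omega, hfy]
        · rw [show ((2:Fin 3)+1 = 0) from rfl, hbasedef, if_pos (by omega : z.val < n-6), vec3_0', hfz]
      · exfalso; omega
      · refine hmk y.val (by omega) 2 ?_ ?_ ?_
        · rw [show ((0:Fin 3)+2 = 2) from rfl, hbasedef, if_pos (by omega : y.val < n-6), vec3_2',
            show y.val+2 = x.val from by omega, hfx]
        · rw [show ((1:Fin 3)+2 = 0) from rfl, hbasedef, if_pos (by omega : y.val < n-6), vec3_0', hfy]
        · rw [show ((2:Fin 3)+2 = 1) from rfl, hbasedef, if_pos (by omega : y.val < n-6), vec3_1',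
            show y.val+1 = z.val from by omega, hfz]
      · exfalso; omega
      · exfalso; omega
      · exfalso; omega
    · -- v v w
      rw [← hx, ← hy, hvadj] at hab
      rw [← hy, ← hi2, hvwadj] at hbc
      rw [← hi2, ← hx, hH] at hca
      have hfx : vv x.val = f 0 := by rw [hvvv, hx]
      have hfy : vv y.val = f 1 := by rw [hvvv, hy]
      have hxlt := x.isLt; have hylt := y.isLt
      have hwi : wiOf (n-6+i2.val - (n-6)) = i2 := by
        rw [show n-6+i2.val - (n-6) = i2.val from by omega]
        exact hwiOfval i2
      have hi2lt := i2.isLt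
      rcases hab with h1|h1
      · refine hmk (n-6+i2.val) (by omega) 0 ?_ ?_ ?_
        · rw [show ((0:Fin 3)+0 = 0) from rfl, hbasedef, if_neg (by omega), vec3_0', hwi,
            show h i2 - 1 = x.val from by omega, hfx]
        · rw [show ((1:Fin 3)+0 = 1) from rfl, hbasedef, if_neg (by omega), vec3_1', hwi,
            show h i2 = y.val from by omega, hfy]
        · rw [show ((2:Fin 3)+0 = 2) from rfl, hbasedef, if_neg (by omega), vec3_2', hwi, hi2]
      · exfalso; omega
    · -- v w v
      rw [← hx, ← hi1, hvwadj] at hab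
      rw [← hi1, ← hz, hH] at hbc
      rw [← hz, ← hx, hvadj] at hca
      have hfx : vv x.val = f 0 := by rw [hvvv, hx]
      have hfz : vv z.val = f 2 := by rw [hvvv, hz]
      have hxlt := x.isLt; have hzlt := z.isLt
      have hwi : wiOf (n-6+i1.val - (n-6)) = i1 := by
        rw [show n-6+i1.val - (n-6) = i1.val from by omega]
        exact hwiOfval i1
      have hi1lt := i1.isLt
      rcases hca with h3|h3
      · refine hmk (n-6+i1.val) (by omega) 1 ?_ ?_ ?_
        · rw [show ((0:Fin 3)+1 = 1) from rfl, hbasedef, if_neg (by omega), vec3_1', hwi,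
            show h i1 = x.val from by omega, hfx]
        · rw [show ((1:Fin 3)+1 = 2) from rfl, hbasedef, if_neg (by omega), vec3_2', hwi, hi1]
        · rw [show ((2:Fin 3)+1 = 0) from rfl, hbasedef, if_neg (by omega), vec3_0', hwi,
            show h i1 - 1 = z.val from by omega, hfz]
      · exfalso; omega
    · -- v w w
      exfalso
      rw [← hx, ← hi1, hvwadj] at hab
      rw [← hi1, ← hi2, hwadj] at hbc
      rw [← hi2, ← hx, hH] at hca
      have := hord i1 i2 hbc
      omega
    · -- w v v
      rw [← hi0, ← hy, hH] at hab
      rw [← hy, ← hz, hvadj] at hbc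
      rw [← hz, ← hi0, hvwadj] at hca
      have hfy : vv y.val = f 1 := by rw [hvvv, hy]
      have hfz : vv z.val = f 2 := by rw [hvvv, hz]
      have hylt := y.isLt; have hzlt := z.isLt
      have hwi : wiOf (n-6+i0.val - (n-6)) = i0 := by
        rw [show n-6+i0.val - (n-6) = i0.val from by omega]
        exact hwiOfval i0
      have hi0lt := i0.isLt
      rcases hbc with h2|h2
      · refine hmk (n-6+i0.val) (by omega) 2 ?_ ?_ ?_
        · rw [show ((0:Fin 3)+2 = 2) from rfl, hbasedef, if_neg (by omega), vec3_2', hwi, hi0]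
        · rw [show ((1:Fin 3)+2 = 0) from rfl, hbasedef, if_neg (by omega), vec3_0', hwi,
            show h i0 - 1 = y.val from by omega, hfy]
        · rw [show ((2:Fin 3)+2 = 1) from rfl, hbasedef, if_neg (by omega), vec3_1', hwi,
            show h i0 = z.val from by omega, hfz]
      · exfalso; omega
    · -- w v w
      exfalso
      rw [← hi0, ← hy, hH] at hab
      rw [← hy, ← hi2, hvwadj] at hbc
      rw [← hi2, ← hi0, hwadj] at hca
      have := hord i2 i0 hca
      omega
    · -- w w v
      exfalso
      rw [← hi0, ← hi1, hwadj] at hab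
      rw [← hi1, ← hz, hH] at hbc
      rw [← hz, ← hi0, hvwadj] at hca
      have := hord i0 i1 hab
      omega
    · -- w w w
      exfalso
      rw [← hi0, ← hi1, hwadj] at hab
      rw [← hi1, ← hi2, hwadj] at hbc
      rw [← hi2, ← hi0, hwadj] at hca
      exact absurd ((hab.trans hbc).trans hca) (lt_irrefl i0)
  have hcardsub : Nat.card {f : Fin 3 → V // Function.Injective f ∧
      ∀ i : Fin 3, T.adj (f i) (f (Tournament.cyc i)) = true} = (n-2) * 3 := by
    rw [← Nat.card_eq_of_bijective g ⟨hginj, hgsurj⟩]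
    simp [Nat.card_eq_fintype_card]
  show Nat.card {f : Fin 3 → V // Function.Injective f ∧
      ∀ i : Fin 3, T.adj (f i) (f (Tournament.cyc i)) = true} / 3 = n - 2
  rw [hcardsub, Nat.mul_div_cancel _ (by norm_num)]
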